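/- Let T be a finite NW-deterministic Wang tile set. The plane ℤ² admits a valid Wang tiling by T if and only if the semigroup ⟨𝒜_T⟩ generated by the associated Mealy automaton 𝒜_T is infinite. -/

import Mathlib

/-- A Mealy automaton with state set `A` and alphabet `X`:
a transition map `δ : A × X → A` and an output map `σ : A × X → X`. -/
structure Mealy (A X : Type*) where
  δ : A → X → A
  σ : A → X → X

namespace Mealy

variable {A X : Type*} (M : Mealy A X)

/-- The state reached from state `a` after reading the finite word `u`. -/
def stA : A → List X → A
  | a, [] => a
  | a, x :: u => stA (M.δ a x) u

/-- The output word produced by the single state `a` on the finite input word `u`. -/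
def outA : A → List X → List X
  | _, [] => []
  | a, x :: u => M.σ a x :: outA (M.δ a x) u

/-- The extended output map: the action `σ_as` of a state word `as` on a finite word. -/
def outW (as : List A) (u : List X) : List X :=
  as.foldl (fun w b => M.outA b w) u

/-- The extended transition map: `δ_u` applied to a state word. -/
def stW : List A → List X → List A
  | [], _ => []
  | a :: as, u => M.stA a u :: stW as (M.outA a u)

/-- The action of a single state `a` on an infinite word. -/
def outInf (a : A) (w : ℕ → X) : ℕ → X :=
  fun n => M.σ (M.stA a (List.ofFn fun i : Fin n => w i)) (w n)

/-- The action `σ_as` of a state word on an infinite word. -/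
def outWInf (as : List A) (w : ℕ → X) : ℕ → X :=
  as.foldl (fun v b => M.outInf b v) w

/-- The semigroup generated by the Mealy automaton, as the set of all
transformations of infinite words given by nonempty state words. -/
def genSet : Set ((ℕ → X) → (ℕ → X)) :=
  {f | ∃ as : List A, as ≠ [] ∧ f = M.outWInf as}

end Mealy

/-- Concatenation of a finite word with an infinite word. -/
def listApp {X : Type*} (p : List X) (q : ℕ → X) : ℕ → X :=
  fun n => if h : n < p.length then p.get ⟨n, h⟩ else q (n - p.length)

/-- A tile set is NW-deterministic if each tile is determined by its
north and west colors. -/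
def NWDet {T C : Type*} (N _S _E W : T → C) : Prop :=
  ∀ s t : T, N s = N t → W s = W t → s = t

open Classical in
/-- The Mealy automaton `𝒜_T` of a tile set: states and letters are tiles
together with a fresh symbol `⊥` (here `none`); the transition is the reset
`δ(x,y) = y`; the output `σ(s,t)` is the unique tile `r` with `r_N = t_S`
and `r_W = s_E` if it exists, and `⊥` otherwise. -/
noncomputable def tileM {T C : Type*} (N S E W : T → C) :
    Mealy (Option T) (Option T) where
  δ := fun _ y => y
  σ := fun a x =>
    match a, x with
    | some s, some t =>
        if h : ∃ r : T, N r = S t ∧ W r = E s then some h.choose else none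
    | _, _ => none

/-- A valid Wang tiling of the plane `ℤ²`. -/
def ValidZ2 {T C : Type*} (N S E W : T → C) (t : ℤ × ℤ → T) : Prop :=
  ∀ x y : ℤ, N (t (x, y)) = S (t (x, y + 1)) ∧ E (t (x, y)) = W (t (x + 1, y))

/-- A valid Wang tiling of the square `{0, 1, …, n}²`. -/
def ValidSquare {T C : Type*} (N S E W : T → C) (n : ℕ) (t : ℕ → ℕ → T) : Prop :=
  (∀ x y : ℕ, x ≤ n → y < n → N (t x y) = S (t x (y + 1))) ∧
  (∀ x y : ℕ, x < n → y ≤ n → E (t x y) = W (t (x + 1) y))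

/-! ### Auxiliary lemmas -/

section Aux

namespace Mealy

variable {A X : Type*} (M : Mealy A X)

lemma outWInf_nil (w : ℕ → X) : M.outWInf [] w = w := rfl

lemma outWInf_cons (a : A) (as : List A) (w : ℕ → X) :
    M.outWInf (a :: as) w = M.outWInf as (M.outInf a w) := rfl

lemma outWInf_append (as bs : List A) (w : ℕ → X) :
    M.outWInf (as ++ bs) w = M.outWInf bs (M.outWInf as w) := by
  simp [Mealy.outWInf, List.foldl_append]

lemma outWInf_singleton (a : A) (w : ℕ → X) :
    M.outWInf [a] w = M.outInf a w := rfl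

lemma outInf_local (a : A) {w w' : ℕ → X} {m : ℕ}
    (h : ∀ i, i ≤ m → w i = w' i) : ∀ i, i ≤ m → M.outInf a w i = M.outInf a w' i := by
  intro i hi
  unfold Mealy.outInf
  have h1 : (List.ofFn fun j : Fin i => w j) = List.ofFn fun j : Fin i => w' j := by
    congr 1
    funext j
    exact h j (le_trans (Nat.le_of_lt j.isLt) hi)
  rw [h1, h i hi]

lemma outWInf_local : ∀ (as : List A) {w w' : ℕ → X} {m : ℕ},
    (∀ i, i ≤ m → w i = w' i) → ∀ i, i ≤ m → M.outWInf as w i = M.outWInf as w' i := by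
  intro as
  induction as with
  | nil => intro w w' m h i hi; exact h i hi
  | cons a as ih =>
    intro w w' m h i hi
    rw [M.outWInf_cons, M.outWInf_cons]
    exact ih (M.outInf_local a h) i hi

end Mealy

variable {T C : Type*} (N S E W : T → C)

lemma tile_sigma_none_left (x : Option T) : (tileM N S E W).σ none x = none := by
  cases x <;> rfl

lemma tile_sigma_none_right (a : Option T) : (tileM N S E W).σ a none = none := by
  cases a <;> rfl

open Classical in
lemma tile_sigma_eq (s t : T) : (tileM N S E W).σ (some s) (some t)
    = if h : ∃ r : T, N r = S t ∧ W r = E s then some h.choose else none := rfl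

lemma tile_sigma_some (hNW : NWDet N S E W) (s t r : T)
    (h1 : N r = S t) (h2 : W r = E s) :
    (tileM N S E W).σ (some s) (some t) = some r := by
  have h : ∃ r' : T, N r' = S t ∧ W r' = E s := ⟨r, h1, h2⟩
  rw [tile_sigma_eq, dif_pos h]
  exact congrArg some (hNW _ _ (h.choose_spec.1.trans h1.symm) (h.choose_spec.2.trans h2.symm))

lemma tile_sigma_inv {a x : Option T} {r : T}
    (h : (tileM N S E W).σ a x = some r) :
    ∃ s t, a = some s ∧ x = some t ∧ N r = S t ∧ W r = E s := by
  match a, x with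
  | none, x => rw [tile_sigma_none_left] at h; exact absurd h (by simp)
  | some s, none => rw [tile_sigma_none_right] at h; exact absurd h (by simp)
  | some s, some t =>
    rw [tile_sigma_eq] at h
    split at h
    · rename_i hex
      refine ⟨s, t, rfl, rfl, ?_, ?_⟩
      · exact (Option.some_injective _ h) ▸ hex.choose_spec.1
      · exact (Option.some_injective _ h) ▸ hex.choose_spec.2
    · exact absurd h (by simp)

lemma tile_stA (u : List (Option T)) (a : Option T) :
    (tileM N S E W).stA a u = u.getLastD a := by
  induction u generalizing a with
  | nil => rfl
  | cons x u ih =>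
    rw [List.getLastD_cons]
    exact ih x

lemma tile_outInf_zero (a : Option T) (w : ℕ → Option T) :
    (tileM N S E W).outInf a w 0 = (tileM N S E W).σ a (w 0) := rfl

lemma tile_outInf_succ (a : Option T) (w : ℕ → Option T) (n : ℕ) :
    (tileM N S E W).outInf a w (n + 1) = (tileM N S E W).σ (w n) (w (n + 1)) := by
  unfold Mealy.outInf
  rw [tile_stA]
  congr 1
  rw [List.ofFn_succ', List.concat_eq_append, List.getLastD_concat]
  simp

end Aux

/-! ### Forward direction: a tiling gives an infinite semigroup -/

section Forward

variable {T C : Type*} (N S E W : T → C)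

/-- The `k`-th diagonal word of a tiling, with `⊥` on the first `k+1` letters. -/
def diagw (t : ℤ × ℤ → T) (k : ℕ) : ℕ → Option T :=
  fun n => if n ≤ k then none else some (t (n, (n : ℤ) - k))

lemma diag_step (hNW : NWDet N S E W) (t : ℤ × ℤ → T) (ht : ValidZ2 N S E W t) (k : ℕ) :
    (tileM N S E W).outInf none (diagw t k) = diagw t (k + 1) := by
  funext n
  match n with
  | 0 =>
    rw [tile_outInf_zero]
    simp [diagw, tile_sigma_none_right, tile_sigma_none_left]
  | Nat.succ n =>
    rw [tile_outInf_succ]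
    by_cases hn : n ≤ k
    · have h1 : diagw t k n = none := if_pos hn
      have h2 : diagw t (k + 1) (n + 1) = none := if_pos (by omega)
      rw [h1, tile_sigma_none_left, h2]
    · have h1 : diagw t k n = some (t (n, (n : ℤ) - k)) := if_neg hn
      have h2 : diagw t k (n + 1) = some (t ((n : ℤ) + 1, (n : ℤ) + 1 - k)) := by
        rw [diagw, if_neg (by omega)]
        push_cast
        ring_nf
      have h3 : diagw t (k + 1) (n + 1) = some (t ((n : ℤ) + 1, (n : ℤ) - k)) := by
        rw [diagw, if_neg (by omega)]
        push_cast
        ring_nf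
      rw [h1, h2, h3]
      apply tile_sigma_some N S E W hNW
      · have h4 := (ht ((n : ℤ) + 1) ((n : ℤ) - k)).1
        have e : (n : ℤ) - (k : ℤ) + 1 = (n : ℤ) + 1 - (k : ℤ) := by ring
        rw [e] at h4
        exact h4
      · exact ((ht (n : ℤ) ((n : ℤ) - k)).2).symm

lemma diag_iter (hNW : NWDet N S E W) (t : ℤ × ℤ → T) (ht : ValidZ2 N S E W t) (k : ℕ) :
    (tileM N S E W).outWInf (List.replicate k none) (diagw t 0) = diagw t k := by
  induction k with
  | zero => rfl
  | succ k ih =>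
    rw [List.replicate_succ', Mealy.outWInf_append, ih, Mealy.outWInf_singleton,
      diag_step N S E W hNW t ht]

lemma forward_infinite (hNW : NWDet N S E W) (t : ℤ × ℤ → T) (ht : ValidZ2 N S E W t) :
    (tileM N S E W).genSet.Infinite := by
  apply Set.infinite_of_injective_forall_mem
    (f := fun k : ℕ => (tileM N S E W).outWInf (List.replicate (k + 1) (none : Option T)))
  case hi =>
    intro k l h
    have h' : (tileM N S E W).outWInf (List.replicate (k + 1) none)
        = (tileM N S E W).outWInf (List.replicate (l + 1) none) := h
    have h2 : diagw t (k + 1) = diagw t (l + 1) := by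
      calc diagw t (k + 1)
          = (tileM N S E W).outWInf (List.replicate (k + 1) none) (diagw t 0) :=
            (diag_iter N S E W hNW t ht (k + 1)).symm
        _ = (tileM N S E W).outWInf (List.replicate (l + 1) none) (diagw t 0) := by rw [h']
        _ = diagw t (l + 1) := diag_iter N S E W hNW t ht (l + 1)
    by_contra hne
    rcases Nat.lt_or_ge k l with hlt | hge
    · have := congrFun h2 (k + 2)
      rw [diagw, diagw, if_neg (by omega), if_pos (by omega)] at this
      exact absurd this (by simp)
    · have hgt : l < k := by omega
      have := congrFun h2 (l + 2)
      rw [diagw, diagw, if_pos (by omega), if_neg (by omega)] at this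
      exact absurd this (by simp)
  case hf =>
    intro k
    exact ⟨List.replicate (k + 1) none, by simp, rfl⟩

end Forward

/-! ### Reverse direction -/

section Reverse

variable {T C : Type*} (N S E W : T → C)

lemma tile_prop_right {a : Option T} {u : ℕ → Option T} {i : ℕ}
    (h : (tileM N S E W).outInf a u i ≠ none) : u i ≠ none := by
  intro h0
  match i with
  | 0 => rw [tile_outInf_zero, h0, tile_sigma_none_right] at h; exact h rfl
  | Nat.succ i => rw [tile_outInf_succ, h0, tile_sigma_none_right] at h; exact h rfl

lemma tile_prop_left {a : Option T} {u : ℕ → Option T} {i : ℕ}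
    (h : (tileM N S E W).outInf a u (i + 1) ≠ none) : u i ≠ none := by
  intro h0
  rw [tile_outInf_succ, h0, tile_sigma_none_left] at h
  exact h rfl

lemma tile_step_some {a : Option T} {u : ℕ → Option T} {i : ℕ} {r : T}
    (h : (tileM N S E W).outInf a u (i + 1) = some r) :
    ∃ s tt, u i = some s ∧ u (i + 1) = some tt ∧ N r = S tt ∧ W r = E s := by
  rw [tile_outInf_succ] at h
  exact tile_sigma_inv N S E W h

/-- If no valid `(n+1) × (n+1)` square exists, then the output of a long
state word is `⊥` far from the origin. -/
lemma none_far {n : ℕ} (Hsq : ¬∃ u : ℕ → ℕ → T, ValidSquare N S E W n u)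
    (as : List (Option T)) (w : ℕ → Option T) (hlen : 2 * n + 1 ≤ as.length)
    (m : ℕ) (hm : n + 1 ≤ m) :
    (tileM N S E W).outWInf as w m = none := by
  by_contra hout
  set k := as.length with hk
  set g : ℕ → ℕ → Option T := fun j => (tileM N S E W).outWInf (as.take j) w with hg
  have hgk : g k = (tileM N S E W).outWInf as w := by
    simp only [hg]
    rw [hk, List.take_length]
  have g_succ : ∀ j (hj : j < k), g (j + 1) = (tileM N S E W).outInf as[j] (g j) := by
    intro j hj
    simp only [hg]
    rw [List.take_succ, List.getElem?_eq_getElem hj]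
    rw [Option.toList_some, Mealy.outWInf_append, Mealy.outWInf_singleton]
  have tri : ∀ j, j ≤ k → ∀ m', m' ≤ m → m ≤ m' + j → g (k - j) m' ≠ none := by
    intro j
    induction j with
    | zero =>
      intro _ m' h1 h2
      have : m' = m := le_antisymm h1 h2
      subst this
      rw [Nat.sub_zero, hgk]
      exact hout
    | succ j ih =>
      intro hjk m' h1 h2
      have hstep : k - j = (k - (j + 1)) + 1 := by omega
      have hlt : k - (j + 1) < k := by omega
      have hgs := g_succ (k - (j + 1)) hlt
      by_cases hcase : m ≤ m' + j
      · have h3 := ih (by omega) m' h1 hcase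
        rw [hstep, hgs] at h3
        exact tile_prop_right N S E W h3
      · have h3 := ih (by omega) (m' + 1) (by omega) (by omega)
        rw [hstep, hgs] at h3
        exact tile_prop_left N S E W h3
  have cells : ∀ x y, x ≤ n → y ≤ n →
      ∃ r : T, g (k - ((n - x) + y)) (m - n + x) = some r := by
    intro x y hx hy
    have h := tri ((n - x) + y) (by omega) (m - n + x) (by omega) (by omega)
    exact Option.ne_none_iff_exists'.mp h
  apply Hsq
  obtain ⟨r0, -⟩ := cells 0 0 (Nat.zero_le n) (Nat.zero_le n)
  haveI : Inhabited T := ⟨r0⟩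
  set uu : ℕ → ℕ → T := fun x y => (g (k - ((n - x) + y)) (m - n + x)).iget with huu_def
  have huu : ∀ x y, x ≤ n → y ≤ n →
      g (k - ((n - x) + y)) (m - n + x) = some (uu x y) := by
    intro x y hx hy
    obtain ⟨r, hr⟩ := cells x y hx hy
    rw [huu_def]
    simp only [hr, Option.iget_some]
  refine ⟨uu, ?_, ?_⟩
  · -- north-south constraints
    intro x y hx hy
    have hxy := huu x y hx (le_of_lt hy)
    have hp1 : k - ((n - x) + y) = (k - ((n - x) + y + 1)) + 1 := by omega
    have hplt : k - ((n - x) + y + 1) < k := by omega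
    rw [hp1, g_succ _ hplt] at hxy
    have hi : m - n + x = (m - n + x - 1) + 1 := by omega
    rw [hi] at hxy
    obtain ⟨s, tt, hs, htt, hN, hW⟩ := tile_step_some N S E W hxy
    rw [← hi] at htt
    have h2 := huu x (y + 1) hx hy
    have harg : k - ((n - x) + (y + 1)) = k - ((n - x) + y + 1) := by omega
    rw [harg, htt] at h2
    rw [hN, Option.some_injective _ h2]
  · -- east-west constraints
    intro x y hx hy
    have hxy := huu (x + 1) y hx hy
    have hp1 : k - ((n - (x + 1)) + y) = (k - ((n - x) + y)) + 1 := by omega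
    have hplt : k - ((n - x) + y) < k := by omega
    rw [hp1, g_succ _ hplt] at hxy
    have hi : m - n + (x + 1) = (m - n + x) + 1 := by omega
    rw [hi] at hxy
    obtain ⟨s, tt, hs, htt, hN, hW⟩ := tile_step_some N S E W hxy
    have h2 := huu x y (by omega) hy
    rw [hs] at h2
    rw [hW, Option.some_injective _ h2]

/-- Compactness: if every square can be tiled, so can the plane. -/
lemma compact_tiling [Fintype T]
    (hT : ∀ n, ∃ u : ℕ → ℕ → T, ValidSquare N S E W n u) :
    ∃ t : ℤ × ℤ → T, ValidZ2 N S E W t := by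
  have hf : ∀ n : ℕ, ∃ u : ℕ → ℕ → T, ValidSquare N S E W (2 * n) u := fun n => hT (2 * n)
  choose f hfv using hf
  set U : Ultrafilter ℕ := Filter.hyperfilter ℕ with hU
  have hcof : ∀ B : ℕ, {n : ℕ | B ≤ n} ∈ U := by
    intro B
    apply Filter.mem_hyperfilter_of_finite_compl
    apply Set.Finite.subset (Set.finite_lt_nat B)
    intro x hx
    simpa using hx
  set s : ℕ → ℤ × ℤ → T := fun n p => f n (p.1 + n).toNat (p.2 + n).toNat with hs
  have hpt : ∀ p : ℤ × ℤ, ∃ a : T, {n : ℕ | s n p = a} ∈ U := by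
    intro p
    obtain ⟨a, ha⟩ := (U.map fun n => s n p).eq_pure_of_finite
    refine ⟨a, ?_⟩
    have : {a} ∈ (U.map fun n => s n p) := by rw [ha]; simp
    rw [Ultrafilter.mem_map] at this
    exact this
  choose F hF using hpt
  refine ⟨F, ?_⟩
  intro x y
  have hmem : ({n : ℕ | x.natAbs + y.natAbs + 2 ≤ n} ∩ ({n | s n (x, y) = F (x, y)} ∩
      ({n | s n (x, y + 1) = F (x, y + 1)} ∩ {n | s n (x + 1, y) = F (x + 1, y)}))) ∈ U :=
    Filter.inter_mem (hcof _) (Filter.inter_mem (hF _) (Filter.inter_mem (hF _) (hF _)))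
  obtain ⟨n, hn1, hn2, hn3, hn4⟩ := Filter.nonempty_of_mem hmem
  simp only [Set.mem_setOf_eq] at hn1 hn2 hn3 hn4
  constructor
  · rw [← hn2, ← hn3]
    simp only [hs]
    have harg : (y + 1 + (n : ℤ)).toNat = (y + (n : ℤ)).toNat + 1 := by omega
    rw [harg]
    exact (hfv n).1 (x + (n : ℤ)).toNat (y + (n : ℤ)).toNat (by omega) (by omega)
  · rw [← hn2, ← hn4]
    simp only [hs]
    have harg : (x + 1 + (n : ℤ)).toNat = (x + (n : ℤ)).toNat + 1 := by omega
    rw [harg]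
    exact (hfv n).2 (x + (n : ℤ)).toNat (y + (n : ℤ)).toNat (by omega) (by omega)

/-- If some square size admits no valid tiling, the generated semigroup is finite. -/
lemma reverse_finite [Fintype T] {n : ℕ}
    (Hsq : ¬∃ u : ℕ → ℕ → T, ValidSquare N S E W n u) :
    (tileM N S E W).genSet.Finite := by
  classical
  set Mn := tileM N S E W with hMn
  set K := 2 * n + 1 with hK
  have hS1 : ((fun as => Mn.outWInf as) '' {as : List (Option T) | as.length ≤ K}).Finite :=
    Set.Finite.image _ (List.finite_length_le (Option T) K)
  set S2 : Set ((ℕ → Option T) → (ℕ → Option T)) :=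
    {f | (∀ w m, n + 1 ≤ m → f w m = none) ∧
      (∀ w w', (∀ i, i ≤ n → w i = w' i) → ∀ m, m ≤ n → f w m = f w' m)} with hS2def
  have hS2 : S2.Finite := by
    set Φ : ((ℕ → Option T) → (ℕ → Option T)) →
        ((Fin (n + 1) → Option T) → (Fin (n + 1) → Option T)) :=
      fun f v i => f (fun j => if h : j < n + 1 then v ⟨j, h⟩ else none) i with hΦ
    apply Set.Finite.of_finite_image (f := Φ) (Set.toFinite _)
    intro f hf f' hf' he
    funext w m
    rcases le_or_gt m n with hm | hm
    · set wt : ℕ → Option T := fun j => if h : j < n + 1 then w j else none with hwt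
      have hag : ∀ i, i ≤ n → w i = wt i := by
        intro i hi
        rw [hwt]
        simp only [dif_pos (by omega : i < n + 1)]
      have e1 : f w m = f wt m := hf.2 w wt hag m hm
      have e2 : f' w m = f' wt m := hf'.2 w wt hag m hm
      have e3 : Φ f (fun i : Fin (n + 1) => w i) ⟨m, by omega⟩
          = Φ f' (fun i : Fin (n + 1) => w i) ⟨m, by omega⟩ := by rw [he]
      simp only [hΦ] at e3
      rw [e1, e2]
      convert e3 using 2
    · rw [hf.1 w m (by omega), hf'.1 w m (by omega)]
  apply Set.Finite.subset (hS1.union hS2)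
  rintro f ⟨as, hne, rfl⟩
  rcases le_or_gt as.length K with hlen | hlen
  · exact Or.inl ⟨as, hlen, rfl⟩
  · refine Or.inr ⟨?_, ?_⟩
    · intro w m hm
      exact none_far N S E W Hsq as w (by omega) m hm
    · intro w w' h m hm
      exact Mn.outWInf_local as h m hm

end Reverse

/-- for a finite NW-deterministic tile set `T`, the plane `ℤ²`
admits a valid Wang tiling by `T` if and only if the semigroup generated by
the Mealy automaton `𝒜_T` is infinite. -/
theorem stmt_12 {T C : Type*} [Fintype T] (N S E W : T → C)
    (hNW : NWDet N S E W) :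
    (∃ t : ℤ × ℤ → T, ValidZ2 N S E W t) ↔ (tileM N S E W).genSet.Infinite := by
  constructor
  · rintro ⟨t, ht⟩
    exact forward_infinite N S E W hNW t ht
  · intro hinf
    by_contra hno
    have hsq : ∃ n : ℕ, ¬∃ u : ℕ → ℕ → T, ValidSquare N S E W n u := by
      by_contra hall
      push_neg at hall
      exact hno (compact_tiling N S E W fun n => hall n)
    obtain ⟨n, Hsq⟩ := hsq
    exact hinf (reverse_finite N S E W Hsq)
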